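/- Fix a nonzero real a and a positive real z. Then the limit as w → z (w > 0) of [ (z·e^{a} − w·e^{a}) · (z·e^{−a} − w·e^{−a}) · ((log z − log w)² − 4a²) ] / [ (z·e^{−a} − w·e^{a}) · (z·e^{a} − w·e^{−a}) · (log z − log w)² ] equals 4a²/(e^{a} − e^{−a})². In particular, with a = ħu/2 this limit equals S(ħu)^{−2} where S(v) = (e^{v/2} − e^{−v/2})/v. -/
import Mathlib

theorem lambert_phi2_hat_diagonal (a : ℝ) (ha : a ≠ 0) (z : ℝ) (hz : 0 < z) :
    Filter.Tendsto
      (fun w : ℝ =>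
        ((z * Real.exp a - w * Real.exp a) * (z * Real.exp (-a) - w * Real.exp (-a)) *
            ((Real.log z - Real.log w) ^ 2 - 4 * a ^ 2)) /
          ((z * Real.exp (-a) - w * Real.exp a) * (z * Real.exp a - w * Real.exp (-a)) *
            (Real.log z - Real.log w) ^ 2))
      (nhdsWithin z {w | 0 < w ∧ w ≠ z})
      (nhds (4 * a ^ 2 / (Real.exp a - Real.exp (-a)) ^ 2)) := by
  have hexp : Real.exp a ≠ Real.exp (-a) := fun h =>
    ha (by have := Real.exp_injective h; linarith)
  have hE : Real.exp a - Real.exp (-a) ≠ 0 := sub_ne_zero.mpr hexp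
  have hprod : Real.exp a * Real.exp (-a) = 1 := by
    rw [← Real.exp_add]; simp
  -- slope of log tends to 1/z, hence the reciprocal tends to z
  have hslope : Filter.Tendsto (fun w : ℝ => (Real.log w - Real.log z) / (w - z))
      (nhdsWithin z {z}ᶜ) (nhds z⁻¹) := by
    have h := hasDerivAt_iff_tendsto_slope.mp (Real.hasDerivAt_log hz.ne')
    exact h.congr (fun w => slope_def_field Real.log z w)
  have hq : Filter.Tendsto (fun w : ℝ => (z - w) / (Real.log z - Real.log w))
      (nhdsWithin z {z}ᶜ) (nhds z) := by
    have h := hslope.inv₀ (inv_ne_zero hz.ne')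
    rw [inv_inv] at h
    refine h.congr (fun w => ?_)
    rw [inv_div, ← neg_div_neg_eq, neg_sub, neg_sub]
  -- our filter is finer than 𝓝[≠] z
  have hle : nhdsWithin z {w : ℝ | 0 < w ∧ w ≠ z} ≤ nhdsWithin z {z}ᶜ :=
    nhdsWithin_mono z (fun w hw => hw.2)
  have hq' := hq.mono_left hle
  -- the continuous factor
  have hDz : (z * Real.exp (-a) - z * Real.exp a) * (z * Real.exp a - z * Real.exp (-a)) ≠ 0 := by
    apply mul_ne_zero
    · intro h
      apply hE
      have : z * (Real.exp (-a) - Real.exp a) = 0 := by linarith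
      have := (mul_eq_zero.mp this).resolve_left hz.ne'
      linarith
    · intro h
      apply hE
      have : z * (Real.exp a - Real.exp (-a)) = 0 := by linarith
      have := (mul_eq_zero.mp this).resolve_left hz.ne'
      linarith
  have hg : Filter.Tendsto (fun w : ℝ =>
      ((Real.log z - Real.log w) ^ 2 - 4 * a ^ 2) /
        ((z * Real.exp (-a) - w * Real.exp a) * (z * Real.exp a - w * Real.exp (-a))))
      (nhdsWithin z {w : ℝ | 0 < w ∧ w ≠ z})
      (nhds (((Real.log z - Real.log z) ^ 2 - 4 * a ^ 2) /
        ((z * Real.exp (-a) - z * Real.exp a) * (z * Real.exp a - z * Real.exp (-a))))) := by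
    apply Filter.Tendsto.mono_left _ nhdsWithin_le_nhds
    have hlog : ContinuousAt Real.log z := Real.continuousAt_log hz.ne'
    exact (ContinuousAt.div (by fun_prop) (by fun_prop) hDz)
  -- combine
  have hmain := (hq'.pow 2).mul hg
  have hval : z ^ 2 * (((Real.log z - Real.log z) ^ 2 - 4 * a ^ 2) /
        ((z * Real.exp (-a) - z * Real.exp a) * (z * Real.exp a - z * Real.exp (-a)))) =
      4 * a ^ 2 / (Real.exp a - Real.exp (-a)) ^ 2 := by
    rw [sub_self]
    field_simp
    ring
  rw [hval] at hmain
  refine hmain.congr' ?_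
  filter_upwards [self_mem_nhdsWithin] with w hw
  obtain ⟨hw0, hwz⟩ := hw
  have hL : Real.log z - Real.log w ≠ 0 := by
    intro h
    exact hwz (Real.log_injOn_pos (Set.mem_Ioi.mpr hz) (Set.mem_Ioi.mpr hw0)
      (by linarith)).symm
  have hnum : (z * Real.exp a - w * Real.exp a) * (z * Real.exp (-a) - w * Real.exp (-a))
      = (z - w) ^ 2 := by
    have : (z * Real.exp a - w * Real.exp a) * (z * Real.exp (-a) - w * Real.exp (-a))
        = (z - w) ^ 2 * (Real.exp a * Real.exp (-a)) := by ring
    rw [this, hprod, mul_one]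
  rw [hnum, div_pow, div_mul_div_comm, mul_comm ((Real.log z - Real.log w) ^ 2)
    ((z * Real.exp (-a) - w * Real.exp a) * (z * Real.exp a - w * Real.exp (-a)))]
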